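/- The Gagliardo-Nirenberg-Sobolev inequality: for 1 ≤ p < N there is a constant C depending only on p and N such that for all compactly supported C¹ functions u : ℝ^N → ℝ, ‖u‖_{L^{p*}(ℝ^N)} ≤ C ‖∇u‖_{L^p(ℝ^N)}, where p* = pN/(N-p). -/
import Mathlib


open MeasureTheory

theorem gagliardo_nirenberg_sobolev (N : ℕ) (hN : 2 ≤ N) (p : ℝ)
    (hp : 1 ≤ p) (hpN : p < N) :
    ∃ C : ℝ, 0 < C ∧ ∀ u : EuclideanSpace ℝ (Fin N) → ℝ,
      ContDiff ℝ 1 u → HasCompactSupport u →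
      eLpNorm u (ENNReal.ofReal (p * N / (N - p))) volume ≤
        ENNReal.ofReal C * eLpNorm (fun x => fderiv ℝ u x) (ENNReal.ofReal p) volume := by
  have hp0 : 0 < p := lt_of_lt_of_le one_pos hp
  have hNp : 0 < (N : ℝ) - p := sub_pos.mpr hpN
  have hN0 : 0 < (N : ℝ) := lt_trans hp0 hpN
  set c : NNReal := SNormLESNormFDerivOfEqConst ℝ (volume : Measure (EuclideanSpace ℝ (Fin N))) p.toNNReal
  refine ⟨max 1 c, lt_of_lt_of_le one_pos (le_max_left _ _), fun u hu h2u => ?_⟩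
  set p' : NNReal := (p * N / (N - p)).toNNReal
  have hp'pos : 0 < p * N / (N - p) := by positivity
  have hp'coe : (p' : ℝ) = p * N / (N - p) := Real.coe_toNNReal _ hp'pos.le
  have hpcoe : (p.toNNReal : ℝ) = p := Real.coe_toNNReal _ hp0.le
  have hfin : Module.finrank ℝ (EuclideanSpace ℝ (Fin N)) = N := by
    simp
  have key := eLpNorm_le_eLpNorm_fderiv_of_eq (F := ℝ)
    (volume : Measure (EuclideanSpace ℝ (Fin N))) hu h2u
    (p := p.toNNReal) (p' := p')
    (by rw [← NNReal.coe_le_coe, hpcoe]; simpa using hp)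
    (by rw [hfin]; omega)
    (by
      rw [hfin, hp'coe]
      push_cast [hpcoe]
      rw [inv_div]
      field_simp)
  have h1 : ENNReal.ofReal (p * N / (N - p)) = (p' : ENNReal) := by
    simp [p', ENNReal.ofReal]
  have h2 : ENNReal.ofReal p = (p.toNNReal : ENNReal) := rfl
  rw [h1, h2]
  refine key.trans (mul_le_mul_left ?_ _)
  rw [← ENNReal.ofReal_coe_nnreal]
  exact ENNReal.ofReal_le_ofReal (le_max_right 1 (c : ℝ))
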